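/- Let A be a finite set, R a finite set of functions A → ℕ such that UG(R) is complete, S° ⊆ A × A a symmetric set (i.e., (a, b) ∈ S° iff (b, a) ∈ S°) with a ≠ b whenever (a, b) ∈ S°, and let (φ, ψ) be a weak tournament pair on O = S° ∩ E(R). Then: (i) for every r ∈ R and all a, b ∈ A, r(φ a b) + r(ψ a b) ≤ r a + r b; and consequently (ii) for every finite set V, weights w : V → R → ℕ, and functions f, g : V → A, defining M(f) = Σ_{v ∈ V} Σ_{r ∈ R} w v r · r(f v) and the pointwise operations φ(f,g)(v) = φ (f v) (g v), ψ(f,g)(v) = ψ (f v) (g v), one has M(φ(f,g)) + M(ψ(f,g)) ≤ M(f) + M(g). -/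
import Mathlib


/-- A binary operation is conservative if it always returns one of its
arguments. -/
def Conservative2 {A : Type*} (f : A → A → A) : Prop :=
  ∀ x y : A, f x y = x ∨ f x y = y

/-- `↓[a,b] f`: the operation `f` returns `b` on the pair `{a, b}`. -/
def DownOp {A : Type*} (a b : A) (f : A → A → A) : Prop :=
  f a b = b ∧ f b a = b

/-- `↑[a,b] f`: the operation `f` returns `a` on the pair `{a, b}`. -/
def UpOp {A : Type*} (a b : A) (f : A → A → A) : Prop :=
  f a b = a ∧ f b a = a

/-- The edge set of the preference graph `G(R)`:
`E(R) = {(a, b) | ∃ r ∈ R, r a > r b}`. -/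
def ER {A : Type*} (R : Set (A → ℕ)) : Set (A × A) :=
  {p | ∃ r ∈ R, r p.2 < r p.1}

/-- `(φ, ψ)` is a weak tournament pair on `O ⊆ A × A`. -/
def WeakTournamentPair {A : Type*} (O : Set (A × A)) (φ ψ : A → A → A) : Prop :=
  (∀ a b : A, (a, b) ∈ O → (b, a) ∈ O →
      (DownOp a b φ ∧ UpOp a b ψ) ∨ (UpOp a b φ ∧ DownOp a b ψ)) ∧
  (∀ a b : A, (a, b) ∈ O → (b, a) ∉ O →
      (DownOp a b φ ∧ UpOp a b ψ) ∨ (UpOp a b φ ∧ DownOp a b ψ) ∨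
        (DownOp a b φ ∧ DownOp a b ψ)) ∧
  (∀ a b : A, a ≠ b → (a, b) ∉ O → (b, a) ∉ O →
      ∀ x ∈ ({a, b} : Set A), ∀ y ∈ ({a, b} : Set A), φ x y = x ∧ ψ x y = y)

/-- A weak tournament pair on `S° ∩ E(R)` is a multimorphism of every measure:
pointwise `r (φ a b) + r (ψ a b) ≤ r a + r b` for `r ∈ R`, and consequently
`M (φ(f,g)) + M (ψ(f,g)) ≤ M f + M g` for every weighted measure `M`. -/
theorem weak_tournament_pair_multimorphism {A : Type*} [Fintype A] [DecidableEq A]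
    (R : Finset (A → ℕ))
    (hUG : ∀ a b : A, a ≠ b →
      (a, b) ∈ ER (↑R : Set (A → ℕ)) ∨ (b, a) ∈ ER (↑R : Set (A → ℕ)))
    (S : Set (A × A))
    (hSsymm : ∀ a b : A, (a, b) ∈ S → (b, a) ∈ S)
    (hSirr : ∀ a b : A, (a, b) ∈ S → a ≠ b)
    (φ ψ : A → A → A) (hφ : Conservative2 φ) (hψ : Conservative2 ψ)
    (hwtp : WeakTournamentPair (S ∩ ER (↑R : Set (A → ℕ))) φ ψ) :
    (∀ r ∈ R, ∀ a b : A, r (φ a b) + r (ψ a b) ≤ r a + r b) ∧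
    (∀ (V : Type) [Fintype V], ∀ (w : V → (A → ℕ) → ℕ) (f g : V → A),
      (∑ v : V, ∑ r ∈ R, w v r * r (φ (f v) (g v))) +
        (∑ v : V, ∑ r ∈ R, w v r * r (ψ (f v) (g v))) ≤
      (∑ v : V, ∑ r ∈ R, w v r * r (f v)) +
        (∑ v : V, ∑ r ∈ R, w v r * r (g v))) := by

  obtain ⟨h1, h2, h3⟩ := hwtp
  have key : ∀ r ∈ R, ∀ a b : A, r (φ a b) + r (ψ a b) ≤ r a + r b := by
    intro r hr a b
    by_cases hab : a = b
    · subst hab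
      rcases hφ a a with h | h <;> rcases hψ a a with h' | h' <;> simp [h, h']
    by_cases h1m : (a, b) ∈ S ∩ ER (↑R : Set (A → ℕ)) <;>
      by_cases h2m : (b, a) ∈ S ∩ ER (↑R : Set (A → ℕ))
    · rcases h1 a b h1m h2m with ⟨⟨hd, _⟩, ⟨hu, _⟩⟩ | ⟨⟨hu, _⟩, ⟨hd, _⟩⟩
      · rw [hd, hu] <;> omega
      · rw [hu, hd] <;> omega
    · have hSba : (b, a) ∈ S := hSsymm a b h1m.1
      have hba : r b ≤ r a := by
        by_contra h; push_neg at h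
        exact h2m ⟨hSba, ⟨r, by simpa using hr, h⟩⟩
      rcases h2 a b h1m h2m with ⟨⟨hd, _⟩, ⟨hu, _⟩⟩ | ⟨⟨hu, _⟩, ⟨hd, _⟩⟩ | ⟨⟨hd, _⟩, ⟨hd', _⟩⟩
      · rw [hd, hu] <;> omega
      · rw [hu, hd] <;> omega
      · rw [hd, hd'] <;> omega
    · have hSab : (a, b) ∈ S := hSsymm b a h2m.1
      have hba : r a ≤ r b := by
        by_contra h; push_neg at h
        exact h1m ⟨hSab, ⟨r, by simpa using hr, h⟩⟩
      rcases h2 b a h2m h1m with ⟨⟨_, hd⟩, ⟨_, hu⟩⟩ | ⟨⟨_, hu⟩, ⟨_, hd⟩⟩ | ⟨⟨_, hd⟩, ⟨_, hd'⟩⟩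
      · rw [hd, hu] <;> omega
      · rw [hu, hd] <;> omega
      · rw [hd, hd'] <;> omega
    · have := h3 a b hab h1m h2m a (by simp) b (by simp)
      rw [this.1, this.2]
  refine ⟨key, ?_⟩
  intro V _ w f g
  rw [← Finset.sum_add_distrib, ← Finset.sum_add_distrib]
  refine Finset.sum_le_sum fun v _ => ?_
  rw [← Finset.sum_add_distrib, ← Finset.sum_add_distrib]
  refine Finset.sum_le_sum fun r hr => ?_
  rw [← Nat.mul_add, ← Nat.mul_add]
  exact Nat.mul_le_mul_left _ (key r hr (f v) (g v))
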